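/- Every nontrivial solution H of the linear ODE H''(x) − coth(x) H'(x) + 2 H(x) = 0 on (0,∞) with H(x)/x² → 1 as x → 0⁺ has infinitely many zeros on (0,∞). -/

import Mathlib

open Real Set Filter Topology

lemma sinh_one_ge : (1:ℝ) ≤ Real.sinh 1 := by
  rw [Real.sinh_eq]
  have h1 : Real.exp 1 > 2.7182818283 := Real.exp_one_gt_d9
  have h3 : (Real.exp 1)⁻¹ < 0.4 := by
    rw [inv_lt_comm₀ (by positivity) (by norm_num)]
    nlinarith
  rw [Real.exp_neg]; nlinarith

lemma key_osc (H H' H'' : ℝ → ℝ)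
    (hd1 : ∀ x ∈ Ioi (0:ℝ), HasDerivAt H (H' x) x)
    (hd2 : ∀ x ∈ Ioi (0:ℝ), HasDerivAt H' (H'' x) x)
    (hode : ∀ x ∈ Ioi (0:ℝ),
      H'' x - (Real.cosh x / Real.sinh x) * H' x + 2 * H x = 0)
    (a : ℝ) (ha : 1 ≤ a)
    (hpos : ∀ x ∈ Icc a (a + π), 0 < H x) : False := by
  set v : ℝ → ℝ := fun y => Real.sqrt (Real.sinh y) * Real.sin (y - a) with hvdef
  set v1 : ℝ → ℝ := fun y =>
    Real.cosh y / (2 * Real.sqrt (Real.sinh y)) * Real.sin (y - a) +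
      Real.sqrt (Real.sinh y) * Real.cos (y - a) with hv1def
  set W : ℝ → ℝ := fun y => (H y * v1 y - H' y * v y) / Real.sinh y with hWdef
  have hb : a ≤ a + π := by linarith [Real.pi_pos]
  have hfacts : ∀ x ∈ Icc a (a + π), (0:ℝ) < x ∧ 0 < Real.sinh x ∧ 1 ≤ Real.sinh x := by
    intro x hx
    have hx1 : (1:ℝ) ≤ x := le_trans ha hx.1
    have hx0 : (0:ℝ) < x := lt_of_lt_of_le one_pos hx1
    have hs1 : Real.sinh 1 ≤ Real.sinh x := Real.sinh_le_sinh.mpr hx1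
    exact ⟨hx0, Real.sinh_pos_iff.mpr hx0, le_trans sinh_one_ge hs1⟩
  have hsq : ∀ x ∈ Icc a (a + π), HasDerivAt (fun y => Real.sqrt (Real.sinh y))
      (Real.cosh x / (2 * Real.sqrt (Real.sinh x))) x := by
    intro x hx
    obtain ⟨hx0, hS, -⟩ := hfacts x hx
    have := (Real.hasDerivAt_sqrt hS.ne').comp x (Real.hasDerivAt_sinh x)
    refine this.congr_deriv (Eq.symm ?_)
    ring
  have hsin : ∀ x : ℝ, HasDerivAt (fun y => Real.sin (y - a)) (Real.cos (x - a)) x := by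
    intro x
    refine ((Real.hasDerivAt_sin (x - a)).comp x ((hasDerivAt_id x).sub_const a)).congr_deriv ?_; simp
  have hcos : ∀ x : ℝ, HasDerivAt (fun y => Real.cos (y - a)) (-Real.sin (x - a)) x := by
    intro x
    refine ((Real.hasDerivAt_cos (x - a)).comp x ((hasDerivAt_id x).sub_const a)).congr_deriv ?_; simp
  have hv : ∀ x ∈ Icc a (a + π), HasDerivAt v (v1 x) x := fun x hx =>
    (hsq x hx).mul (hsin x)
  -- derivative of v1
  have hv1 : ∀ x ∈ Icc a (a + π), HasDerivAt v1
      ((Real.cosh x / Real.sinh x) * v1 x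
        - (5/4 + 3/(4 * Real.sinh x ^ 2)) * v x) x := by
    intro x hx
    obtain ⟨hx0, hS, -⟩ := hfacts x hx
    set s := Real.sqrt (Real.sinh x) with hsdef
    have hsp : (0:ℝ) < s := Real.sqrt_pos.mpr hS
    have hs2 : Real.sinh x = s ^ 2 := (Real.sq_sqrt hS.le).symm
    have hch : Real.cosh x ^ 2 = s ^ 4 + 1 := by
      rw [Real.cosh_sq, hs2]; ring
    have hden : HasDerivAt (fun y => 2 * Real.sqrt (Real.sinh y))
        (2 * (Real.cosh x / (2 * Real.sqrt (Real.sinh x)))) x := (hsq x hx).const_mul 2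
    have hdenne : 2 * Real.sqrt (Real.sinh x) ≠ 0 := by positivity
    have hf : HasDerivAt (fun y => Real.cosh y / (2 * Real.sqrt (Real.sinh y)))
        ((Real.sinh x * (2 * Real.sqrt (Real.sinh x)) -
          Real.cosh x * (2 * (Real.cosh x / (2 * Real.sqrt (Real.sinh x))))) /
          (2 * Real.sqrt (Real.sinh x)) ^ 2) x :=
      (Real.hasDerivAt_cosh x).div hden hdenne
    have h := (hf.mul (hsin x)).add ((hsq x hx).mul (hcos x))
    refine h.congr_deriv (Eq.symm ?_)
    simp only [hv1def, hvdef, ← hsdef]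
    rw [hs2]
    field_simp
    linear_combination (12 * Real.sin (x - a)) * hch
  -- derivative of W
  have hW : ∀ x ∈ Icc a (a + π), HasDerivAt W
      ((2 - (5/4 + 3/(4 * Real.sinh x ^ 2))) * H x * v x / Real.sinh x) x := by
    intro x hx
    obtain ⟨hx0, hS, -⟩ := hfacts x hx
    have hxIoi : x ∈ Ioi (0:ℝ) := hx0
    have hN : HasDerivAt (fun y => H y * v1 y - H' y * v y)
        (H' x * v1 x + H x * ((Real.cosh x / Real.sinh x) * v1 x
            - (5/4 + 3/(4 * Real.sinh x ^ 2)) * v x)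
          - (H'' x * v x + H' x * v1 x)) x :=
      ((hd1 x hxIoi).mul (hv1 x hx)).sub ((hd2 x hxIoi).mul (hv x hx))
    have h := hN.div (Real.hasDerivAt_sinh x) hS.ne'
    refine h.congr_deriv (Eq.symm ?_)
    have hH2 : H'' x = (Real.cosh x / Real.sinh x) * H' x - 2 * H x := by
      have := hode x hxIoi; linarith
    rw [hH2]
    field_simp
    ring
  -- W is monotone on the interval
  have hmono : MonotoneOn W (Icc a (a + π)) := by
    apply monotoneOn_of_deriv_nonneg (convex_Icc _ _)
    · exact fun x hx => (hW x hx).continuousAt.continuousWithinAt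
    · intro x hx
      exact ((hW x (interior_subset hx)).differentiableAt).differentiableWithinAt
    · intro x hx
      have hx' := interior_subset hx
      rw [(hW x hx').deriv]
      obtain ⟨hx0, hS, hS1⟩ := hfacts x hx'
      have hvpos : 0 ≤ v x := by
        apply mul_nonneg (Real.sqrt_nonneg _)
        apply Real.sin_nonneg_of_nonneg_of_le_pi
        · linarith [hx'.1]
        · linarith [hx'.2]
      have hq : (0:ℝ) ≤ 2 - (5/4 + 3/(4 * Real.sinh x ^ 2)) := by
        have h34 : 3/(4 * Real.sinh x ^ 2) ≤ 3/4 := by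
          apply div_le_div_of_nonneg_left (by norm_num) (by norm_num)
          nlinarith
        linarith
      have := mul_nonneg (mul_nonneg hq (hpos x hx').le) hvpos
      exact div_nonneg this hS.le
  -- endpoint values
  have hWa : 0 < W a := by
    have hS : 0 < Real.sinh a := Real.sinh_pos_iff.mpr (lt_of_lt_of_le one_pos ha)
    have hHa : 0 < H a := hpos a ⟨le_refl a, hb⟩
    have hWav : W a = H a * Real.sqrt (Real.sinh a) / Real.sinh a := by
      simp [hWdef, hv1def, hvdef]
    rw [hWav]
    exact div_pos (mul_pos hHa (Real.sqrt_pos.mpr hS)) hS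
  have hWb : W (a + π) < 0 := by
    have hS : 0 < Real.sinh (a + π) := Real.sinh_pos_iff.mpr (by nlinarith [Real.pi_pos])
    have hHb : 0 < H (a + π) := hpos _ ⟨hb, le_refl _⟩
    have hWbv : W (a + π) = -(H (a + π) * Real.sqrt (Real.sinh (a + π))) / Real.sinh (a + π) := by
      simp [hWdef, hv1def, hvdef, add_sub_cancel_left]
    rw [hWbv]
    apply div_neg_of_neg_of_pos _ hS
    have := mul_pos hHb (Real.sqrt_pos.mpr hS)
    linarith
  have := hmono (left_mem_Icc.mpr hb) (right_mem_Icc.mpr hb) hb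
  linarith

/-- The solution of the linearized equation (22), `H'' - coth(x) H' + 2H = 0`, with
`H(x) ~ x²` near `x = 0`, oscillates at infinity: it has infinitely many zeros. -/
theorem linearized_solution_oscillates
    (H H' H'' : ℝ → ℝ)
    (hd1 : ∀ x ∈ Ioi (0:ℝ), HasDerivAt H (H' x) x)
    (hd2 : ∀ x ∈ Ioi (0:ℝ), HasDerivAt H' (H'' x) x)
    (hode : ∀ x ∈ Ioi (0:ℝ),
      H'' x - (Real.cosh x / Real.sinh x) * H' x + 2 * H x = 0)
    (hasymp : Filter.Tendsto (fun x => H x / x ^ 2) (𝓝[>] (0:ℝ)) (𝓝 1)) :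
    {x ∈ Ioi (0:ℝ) | H x = 0}.Infinite := by
  by_contra hinf
  rw [Set.not_infinite] at hinf
  obtain ⟨M, hM⟩ := hinf.bddAbove
  set a : ℝ := max M 1 + 1 with hadef
  have ha : 1 ≤ a := by
    have := le_max_right M 1; simp only [hadef]; linarith
  have haM : M < a := by
    have := le_max_left M 1; simp only [hadef]; linarith
  have hnz : ∀ x, a ≤ x → H x ≠ 0 := by
    intro x hax hx0
    have hxpos : (0:ℝ) < x := by linarith
    have : x ∈ {x ∈ Ioi (0:ℝ) | H x = 0} := ⟨hxpos, hx0⟩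
    have := hM this
    linarith
  have hcontOn : ∀ x, a ≤ x → ContinuousOn H (Icc a x) := by
    intro x hax
    intro y hy
    have hy0 : (0:ℝ) < y := by have := hy.1; linarith
    exact ((hd1 y hy0).continuousAt).continuousWithinAt
  rcases (hnz a le_rfl).lt_or_gt with hneg | hpos
  · -- H a < 0 : all of H is negative on [a, a+π], apply key_osc to -H
    have hposG : ∀ x ∈ Icc a (a + π), 0 < -H x := by
      intro x hx
      rcases (hnz x hx.1).lt_or_gt with h | h
      · linarith
      · exfalso
        have hsub : Icc (H a) (H x) ⊆ H '' Icc a x :=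
          intermediate_value_Icc hx.1 (hcontOn x hx.1)
        obtain ⟨c, hc, hc0⟩ := hsub ⟨hneg.le, h.le⟩
        exact hnz c hc.1 hc0
    exact key_osc (fun y => -H y) (fun y => -H' y) (fun y => -H'' y)
      (fun x hx => (hd1 x hx).neg) (fun x hx => (hd2 x hx).neg)
      (fun x hx => by have := hode x hx; linarith)
      a ha hposG
  · -- H a > 0
    have hposH : ∀ x ∈ Icc a (a + π), 0 < H x := by
      intro x hx
      rcases (hnz x hx.1).lt_or_gt with h | h
      · exfalso
        have hsub : Icc (H x) (H a) ⊆ H '' Icc a x :=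
          intermediate_value_Icc' hx.1 (hcontOn x hx.1)
        obtain ⟨c, hc, hc0⟩ := hsub ⟨h.le, hpos.le⟩
        exact hnz c hc.1 hc0
      · exact h
    exact key_osc H H' H'' hd1 hd2 hode a ha hposH
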